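/- With sin_q(z) = sum_{n≥0} (-1)^n q^(2n^2+n) z^(2n+1)/[2n+1]_q! and cos_q(z) = sum_{n≥0} (-1)^n z^(2n)/[2n]_q! as formal power series over Q(q), one has sin_q(z)·sin_{1/q}(z) + cos_q(z)·cos_{1/q}(z) = 1. -/

import Mathlib

noncomputable section
open Finset PowerSeries

abbrev Fq : Type := RatFunc ℚ

/-- The variable `q` as element of the field of rational functions `ℚ(q)`. -/
def qv : Fq := RatFunc.X

/-- The q-integer `[m]_q = 1 + q + ... + q^(m-1)`. -/
def qInt (x : Fq) (m : ℕ) : Fq := ∑ i ∈ Finset.range m, x ^ i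

/-- The q-factorial `[m]_q! = [1]_q [2]_q ⋯ [m]_q`. -/
def qFact (x : Fq) (m : ℕ) : Fq := ∏ i ∈ Finset.range m, qInt x (i + 1)


lemma qv_ne_zero : qv ≠ 0 := RatFunc.X_ne_zero

lemma qv_pow_ne_one {m : ℕ} (hm : m ≠ 0) : qv ^ m ≠ 1 := by
  intro h
  have hinj := IsFractionRing.injective (Polynomial ℚ) (RatFunc ℚ)
  have : (Polynomial.X : Polynomial ℚ) ^ m = 1 := by
    apply hinj
    rw [map_pow, map_one, RatFunc.algebraMap_X]
    exact h
  have := congrArg Polynomial.natDegree this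
  simp [Polynomial.natDegree_X_pow] at this
  exact hm this

lemma qInt_qv_ne_zero {m : ℕ} (hm : m ≠ 0) : qInt qv m ≠ 0 := by
  intro h
  have hg : qInt qv m * (qv - 1) = qv ^ m - 1 := geom_sum_mul qv m
  rw [h, zero_mul] at hg
  exact qv_pow_ne_one hm (by linear_combination -hg)

lemma qFact_qv_ne_zero (m : ℕ) : qFact qv m ≠ 0 := by
  apply Finset.prod_ne_zero_iff.mpr
  intro i _
  exact qInt_qv_ne_zero (Nat.succ_ne_zero i)

lemma qFact_succ (x : Fq) (m : ℕ) : qFact x (m + 1) = qFact x m * qInt x (m + 1) :=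
  Finset.prod_range_succ _ _

lemma qInt_zero (x : Fq) : qInt x 0 = 0 := by simp [qInt]

lemma qInt_add (x : Fq) (a b : ℕ) : qInt x (a + b) = qInt x a + x ^ a * qInt x b := by
  simp [qInt, Finset.sum_range_add, Finset.mul_sum, pow_add]

lemma qv_pow_mul_qInt_inv (m : ℕ) : qv ^ m * qInt qv⁻¹ (m + 1) = qInt qv (m + 1) := by
  unfold qInt
  rw [Finset.mul_sum, ← Finset.sum_range_reflect (fun i => qv ^ i) (m + 1)]
  apply Finset.sum_congr rfl
  intro i hi
  simp only [Finset.mem_range] at hi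
  rw [inv_pow, show m + 1 - 1 - i = m - i from by omega, eq_comm]
  rw [pow_sub₀ qv qv_ne_zero (by omega : i ≤ m)]

lemma qFact_inv_mul (m : ℕ) : qFact qv⁻¹ m * qv ^ (m * (m - 1) / 2) = qFact qv m := by
  induction m with
  | zero => simp [qFact]
  | succ m ih =>
    rw [qFact_succ, qFact_succ, Nat.triangle_succ m, pow_add]
    calc qFact qv⁻¹ m * qInt qv⁻¹ (m + 1) * (qv ^ (m * (m - 1) / 2) * qv ^ m)
        = qFact qv⁻¹ m * qv ^ (m * (m - 1) / 2) * (qv ^ m * qInt qv⁻¹ (m + 1)) := by ring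
      _ = qFact qv m * qInt qv (m + 1) := by rw [ih, qv_pow_mul_qInt_inv]

lemma qFact_inv_eq (m : ℕ) : qFact qv⁻¹ m = qFact qv m / qv ^ (m * (m - 1) / 2) := by
  rw [eq_div_iff (pow_ne_zero _ qv_ne_zero)]
  exact qFact_inv_mul m

def qChoose : ℕ → ℕ → Fq
  | 0, 0 => 1
  | 0, _ + 1 => 0
  | _ + 1, 0 => 1
  | n + 1, k + 1 => qChoose n k + qv ^ (k + 1) * qChoose n (k + 1)

lemma qChoose_eq_zero : ∀ n k : ℕ, n < k → qChoose n k = 0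
  | 0, _ + 1, _ => rfl
  | n + 1, k + 1, h => by
    show qChoose n k + qv ^ (k + 1) * qChoose n (k + 1) = 0
    rw [qChoose_eq_zero n k (by omega), qChoose_eq_zero n (k + 1) (by omega)]
    ring

lemma qChoose_fact : ∀ n k : ℕ, k ≤ n → qFact qv k * qFact qv (n - k) * qChoose n k = qFact qv n := by
  intro n
  induction n with
  | zero =>
    intro k hk
    interval_cases k
    show qFact qv 0 * qFact qv 0 * 1 = qFact qv 0
    simp [qFact]
  | succ n ih =>
    intro k hk
    match k with
    | 0 =>
      show qFact qv 0 * qFact qv (n + 1) * 1 = qFact qv (n + 1)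
      simp [qFact]
    | j + 1 =>
      have hj : j ≤ n := by omega
      show qFact qv (j + 1) * qFact qv (n + 1 - (j + 1)) *
        (qChoose n j + qv ^ (j + 1) * qChoose n (j + 1)) = qFact qv (n + 1)
      rw [show n + 1 - (j + 1) = n - j from by omega, mul_add]
      have t1 : qFact qv (j + 1) * qFact qv (n - j) * qChoose n j
          = qInt qv (j + 1) * qFact qv n := by
        rw [qFact_succ]
        calc qFact qv j * qInt qv (j + 1) * qFact qv (n - j) * qChoose n j
            = qInt qv (j + 1) * (qFact qv j * qFact qv (n - j) * qChoose n j) := by ring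
          _ = qInt qv (j + 1) * qFact qv n := by rw [ih j hj]
      have t2 : qFact qv (j + 1) * qFact qv (n - j) * (qv ^ (j + 1) * qChoose n (j + 1))
          = qv ^ (j + 1) * qInt qv (n - j) * qFact qv n := by
        by_cases hjn : j = n
        · subst hjn
          rw [qChoose_eq_zero j (j + 1) (by omega), Nat.sub_self, qInt_zero]
          ring
        · have hj1 : j + 1 ≤ n := by omega
          have hsplit : qFact qv (n - j) = qFact qv (n - (j + 1)) * qInt qv (n - (j + 1) + 1) := by
            rw [show n - j = n - (j + 1) + 1 from by omega, qFact_succ]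
          rw [hsplit]
          calc qFact qv (j + 1) * (qFact qv (n - (j + 1)) * qInt qv (n - (j + 1) + 1)) *
                (qv ^ (j + 1) * qChoose n (j + 1))
              = qv ^ (j + 1) * qInt qv (n - (j + 1) + 1) *
                (qFact qv (j + 1) * qFact qv (n - (j + 1)) * qChoose n (j + 1)) := by ring
            _ = qv ^ (j + 1) * qInt qv (n - (j + 1) + 1) * qFact qv n := by rw [ih (j + 1) hj1]
            _ = qv ^ (j + 1) * qInt qv (n - j) * qFact qv n := by
                rw [show n - (j + 1) + 1 = n - j from by omega]
      rw [t1, t2, qFact_succ]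
      have hadd : qInt qv (n + 1) = qInt qv (j + 1) + qv ^ (j + 1) * qInt qv (n - j) := by
        rw [show n + 1 = (j + 1) + (n - j) from by omega, qInt_add]
      rw [hadd]
      ring

lemma tri (k : ℕ) : (k + 1) * (k + 2) / 2 = k * (k + 1) / 2 + (k + 1) := by
  obtain ⟨a, ha⟩ := Nat.even_mul_succ_self k
  have h2 : (k + 1) * (k + 2) = k * (k + 1) + 2 * (k + 1) := by ring
  rw [h2, ha]
  omega

lemma comm_half (k : ℕ) : (k + 1) * k / 2 = k * (k + 1) / 2 := by rw [Nat.mul_comm]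

lemma odd_exp (t : ℕ) (h : t % 2 = 1) : 2 * (t / 2) ^ 2 + t / 2 = t * (t - 1) / 2 := by
  obtain ⟨j, rfl⟩ : ∃ j, t = 2 * j + 1 := ⟨t / 2, by omega⟩
  have h1 : (2 * j + 1) / 2 = j := by omega
  have h2 : (2 * j + 1) * (2 * j + 1 - 1) = 2 * (2 * j ^ 2 + j) := by
    rw [show 2 * j + 1 - 1 = 2 * j from rfl]; ring
  rw [h1, h2, Nat.mul_div_cancel_left _ (by norm_num : 0 < 2)]

lemma neg_one_pow_eq {a b : ℕ} (h : a % 2 = b % 2) : (-1 : Fq) ^ a = (-1 : Fq) ^ b := by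
  rcases Nat.even_or_odd a with ha | ha
  · have hb : Even b := Nat.even_iff.mpr (by have := Nat.even_iff.mp ha; omega)
    rw [ha.neg_one_pow, hb.neg_one_pow]
  · have hb : Odd b := Nat.odd_iff.mpr (by have := Nat.odd_iff.mp ha; omega)
    rw [ha.neg_one_pow, hb.neg_one_pow]

lemma qChoose_zero : ∀ n : ℕ, qChoose n 0 = 1
  | 0 => rfl
  | _ + 1 => rfl

lemma gauss_succ (n : ℕ) :
    ∑ k ∈ Finset.range (n + 2), ((-1 : Fq) ^ k * qv ^ (k * (k - 1) / 2) * qChoose (n + 1) k) = 0 := by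
  rw [Finset.sum_range_succ']
  have hf0 : ((-1 : Fq) ^ 0 * qv ^ (0 * (0 - 1) / 2) * qChoose (n + 1) 0) = 1 := by
    show (-1 : Fq) ^ 0 * qv ^ 0 * 1 = 1; ring
  rw [hf0]
  set g : ℕ → Fq := fun k => (-1 : Fq) ^ k * qv ^ (k * (k + 1) / 2) * qChoose n k with hg
  have hstep : ∀ k ∈ Finset.range (n + 1),
      ((-1 : Fq) ^ (k + 1) * qv ^ ((k + 1) * (k + 1 - 1) / 2) * qChoose (n + 1) (k + 1))
      = g (k + 1) - g k := by
    intro k _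
    have pas : qChoose (n + 1) (k + 1) = qChoose n k + qv ^ (k + 1) * qChoose n (k + 1) := rfl
    rw [pas, hg]
    simp only []
    have e1 : (k + 1) * (k + 1 - 1) / 2 = k * (k + 1) / 2 := comm_half k
    have e2 : (k + 1) * (k + 1 + 1) / 2 = k * (k + 1) / 2 + (k + 1) := tri k
    rw [e1, e2, pow_add]
    ring
  rw [Finset.sum_congr rfl hstep, Finset.sum_range_sub g (n + 1)]
  have hgn : g (n + 1) = 0 := by
    simp [hg, qChoose_eq_zero n (n + 1) (by omega)]
  have hg0 : g 0 = 1 := by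
    simp [hg, qChoose_zero]
  rw [hgn, hg0]
  ring

lemma gauss (n : ℕ) (hn : n ≠ 0) :
    ∑ k ∈ Finset.range (n + 1), ((-1 : Fq) ^ k * qv ^ (k * (k - 1) / 2) * qChoose n k) = 0 := by
  obtain ⟨m, rfl⟩ := Nat.exists_eq_succ_of_ne_zero hn
  exact gauss_succ m

/-- `sin_q(z) = ∑ (-1)^n q^(2n^2+n) z^(2n+1)/[2n+1]_q!`. -/
def qsin (x : Fq) : PowerSeries Fq :=
  PowerSeries.mk fun m =>
    if m % 2 = 1 then (-1 : Fq) ^ (m / 2) * x ^ (2 * (m / 2) ^ 2 + m / 2) / qFact x m else 0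

/-- `cos_q(z) = ∑ (-1)^n z^(2n)/[2n]_q!`. -/
def qcos (x : Fq) : PowerSeries Fq :=
  PowerSeries.mk fun m => if m % 2 = 0 then (-1 : Fq) ^ (m / 2) / qFact x m else 0


lemma key (n k : ℕ) (hk : k ≤ n) (hn : n % 2 = 0) :
    (coeff k) (qsin qv) * (coeff (n - k)) (qsin qv⁻¹)
      + (coeff k) (qcos qv⁻¹) * (coeff (n - k)) (qcos qv)
    = (-1 : Fq) ^ (n / 2) / qFact qv n * ((-1) ^ k * qv ^ (k * (k - 1) / 2) * qChoose n k) := by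
  have hcf := qChoose_fact n k hk
  have h1 := qFact_qv_ne_zero k
  have h2 := qFact_qv_ne_zero (n - k)
  have h3 := qFact_qv_ne_zero n
  have hq := qv_ne_zero
  simp only [qsin, qcos, coeff_mk]
  by_cases hk2 : k % 2 = 1
  · have hnk2 : (n - k) % 2 = 1 := by omega
    rw [if_pos hk2, if_pos hnk2, if_neg (by omega), if_neg (by omega)]
    rw [odd_exp k hk2, odd_exp (n - k) hnk2, qFact_inv_eq (n - k), inv_pow]
    have hs : (-1 : Fq) ^ (k / 2) * (-1) ^ ((n - k) / 2) = (-1) ^ (n / 2) * (-1) ^ k := by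
      rw [← pow_add, ← pow_add]
      exact neg_one_pow_eq (by omega)
    field_simp
    linear_combination qv ^ (k * (k - 1) / 2) * qFact qv n * hs
      - qv ^ (k * (k - 1) / 2) * ((-1 : Fq) ^ (n / 2) * (-1) ^ k) * hcf
  · have hk2' : k % 2 = 0 := by omega
    have hnk2 : (n - k) % 2 = 0 := by omega
    rw [if_neg (by omega), if_neg (by omega), if_pos hk2', if_pos hnk2]
    have hs : (-1 : Fq) ^ (k / 2) * (-1) ^ ((n - k) / 2) = (-1) ^ (n / 2) * (-1) ^ k := by
      rw [← pow_add, ← pow_add]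
      exact neg_one_pow_eq (by omega)
    rw [qFact_inv_eq k]
    field_simp
    linear_combination qv ^ (k * (k - 1) / 2) * qFact qv n * hs
      - qv ^ (k * (k - 1) / 2) * ((-1 : Fq) ^ (n / 2) * (-1) ^ k) * hcf

theorem q_sine_cosine_pair_2100 :
    qsin qv * qsin qv⁻¹ + qcos qv * qcos qv⁻¹ = 1 := by
  ext n
  rw [map_add, show qcos qv * qcos qv⁻¹ = qcos qv⁻¹ * qcos qv from mul_comm _ _,
    coeff_mul, coeff_mul]
  simp only [Finset.Nat.sum_antidiagonal_eq_sum_range_succ_mk]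
  rw [← Finset.sum_add_distrib, PowerSeries.coeff_one]
  by_cases hpar : n % 2 = 1
  · rw [if_neg (by omega)]
    apply Finset.sum_eq_zero
    intro k hk
    simp only [Finset.mem_range] at hk
    simp only [qsin, qcos, coeff_mk]
    by_cases h2 : k % 2 = 1
    · have h3 : (n - k) % 2 = 0 := by omega
      simp [h2, h3]
    · have h2' : k % 2 = 0 := by omega
      have h3 : (n - k) % 2 = 1 := by omega
      simp [h2', h3]
  · have hn2 : n % 2 = 0 := by omega
    rw [Finset.sum_congr rfl
      (fun k hk => key n k (by simp only [Finset.mem_range] at hk; omega) hn2)]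
    rw [← Finset.mul_sum]
    by_cases h0 : n = 0
    · subst h0
      rw [if_pos rfl]
      simp [qFact, qChoose]
    · rw [gauss n h0, mul_zero, if_neg h0]
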